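/- Let 0 < α < 2 and 0 < s ≤ 1, and let u : ℝ → ℝ be a nonnegative 2π-periodic C² function. Then 0 ≤ ∫_{−π}^{π} u(x)^s · Λ^α u(x) dx. -/

import Mathlib

open MeasureTheory Real

/-- The constant `c_σ = Γ(1+σ) cos((1−σ)π/2) / π`. -/
noncomputable def cFrac (σ : ℝ) : ℝ :=
  Real.Gamma (1 + σ) * Real.cos ((1 - σ) * Real.pi / 2) / Real.pi

/-- The periodized kernel `K_σ(η) = ∑_{k∈ℤ} |η + 2kπ|^{-(1+σ)}`. -/
noncomputable def Kper (σ η : ℝ) : ℝ :=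
  ∑' k : ℤ, |η + 2 * (k : ℝ) * Real.pi| ^ (-(1 + σ))

/-- The fractional Laplacian `Λ^σ f` of a `2π`-periodic function, defined by
`Λ^σ f(x) = (c_σ/2) ∫_{-π}^{π} (2f(x) − f(x+η) − f(x−η)) K_σ(η) dη`. -/
noncomputable def fracLap (σ : ℝ) (f : ℝ → ℝ) (x : ℝ) : ℝ :=
  (cFrac σ / 2) *
    ∫ η in (-Real.pi)..Real.pi, (2 * f x - f (x + η) - f (x - η)) * Kper σ η

namespace Stmt8Aux

open Set

lemma Kper_summable (α : ℝ) (hα0 : 0 < α) (η : ℝ) :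
    Summable (fun k : ℤ => |η + 2 * (k : ℝ) * Real.pi| ^ (-(1 + α))) := by
  have h2π : (0:ℝ) < 2 * π := by positivity
  have key : ∀ k : ℤ, |η + 2 * (k : ℝ) * π| ^ (-(1 + α))
      = (2*π) ^ (-(1+α)) * (1 / |(k:ℝ) + η / (2*π)| ^ (1+α)) := by
    intro k
    have : η + 2 * (k:ℝ) * π = (2*π) * ((k:ℝ) + η / (2*π)) := by field_simp; ring
    rw [this, abs_mul, abs_of_pos h2π, Real.mul_rpow h2π.le (abs_nonneg _),
      Real.rpow_neg (abs_nonneg _), one_div]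
  rw [funext key]
  exact ((Real.summable_one_div_int_add_rpow _ _).mpr (by linarith)).mul_left _

lemma Kper_nonneg (α η : ℝ) : 0 ≤ Kper α η :=
  tsum_nonneg fun _ => Real.rpow_nonneg (abs_nonneg _) _

noncomputable def Mtail (α : ℝ) : ℝ := ∑' k : ℤ, π ^ (-(1+α)) * |(k:ℝ)| ^ (-(1+α))

lemma Mtail_summable (α : ℝ) (hα0 : 0 < α) :
    Summable (fun k : ℤ => π ^ (-(1+α)) * |(k:ℝ)| ^ (-(1+α))) :=
  (summable_abs_int_rpow (by linarith)).mul_left _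

lemma Mtail_nonneg (α : ℝ) : 0 ≤ Mtail α :=
  tsum_nonneg fun _ => mul_nonneg (Real.rpow_nonneg pi_pos.le _) (Real.rpow_nonneg (abs_nonneg _) _)

lemma Kper_le (α : ℝ) (hα0 : 0 < α) {η : ℝ} (hη : |η| ≤ π) :
    Kper α η ≤ |η| ^ (-(1+α)) + Mtail α := by
  set p := 1 + α with hp
  have hppos : 0 < p := by linarith
  set T : ℤ → ℝ := fun k => π ^ (-p) * |(k:ℝ)| ^ (-p) + (if k = 0 then |η| ^ (-p) else 0) with hT
  have hTsum : Summable T :=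
    (Mtail_summable α hα0).add (summable_of_ne_finset_zero (s := {0}) (fun k hk => by
      simp only [Finset.mem_singleton] at hk; simp [hk]))
  have hle : ∀ k : ℤ, |η + 2 * (k : ℝ) * π| ^ (-p) ≤ T k := by
    intro k
    by_cases hk : k = 0
    · subst hk
      simp only [hT, Int.cast_zero, mul_zero, zero_mul, add_zero, abs_zero, if_true]
      rw [Real.zero_rpow (neg_ne_zero.mpr hppos.ne')]
      simp
    · have hk1 : (1:ℝ) ≤ |(k:ℝ)| := by
        rw [← Int.cast_abs]
        exact_mod_cast Int.one_le_abs (by exact_mod_cast hk)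
      have h2 : |2 * (k:ℝ) * π| = 2 * π * |(k:ℝ)| := by
        rw [abs_mul, abs_mul, abs_two, abs_of_pos pi_pos]; ring
      have h3 : |2*(k:ℝ)*π| ≤ |η + 2*(k:ℝ)*π| + |η| := by
        calc |2*(k:ℝ)*π| = |(η + 2*(k:ℝ)*π) + (-η)| := by congr 1; ring
          _ ≤ |η + 2*(k:ℝ)*π| + |(-η)| := abs_add_le _ _
          _ = |η + 2*(k:ℝ)*π| + |η| := by rw [abs_neg]
      have hbase : π * |(k:ℝ)| ≤ |η + 2 * (k:ℝ) * π| := by nlinarith [pi_pos]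
      have hpk : 0 < π * |(k:ℝ)| := by positivity
      have := Real.rpow_le_rpow_of_nonpos hpk hbase (by linarith : -p ≤ 0)
      calc |η + 2 * (k:ℝ) * π| ^ (-p) ≤ (π * |(k:ℝ)|) ^ (-p) := this
        _ = π ^ (-p) * |(k:ℝ)| ^ (-p) := Real.mul_rpow pi_pos.le (abs_nonneg _)
        _ ≤ T k := by simp [hT, hk]
  have := (Kper_summable α hα0 η).tsum_le_tsum hle hTsum
  calc Kper α η ≤ ∑' k, T k := this
    _ = Mtail α + |η| ^ (-p) := by
        rw [hT, Summable.tsum_add (Mtail_summable α hα0) (summable_of_ne_finset_zero (s := {0})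
          (fun k hk => by simp only [Finset.mem_singleton] at hk; simp [hk])), Mtail]
        congr 1
        exact tsum_ite_eq (0 : ℤ) _
    _ = |η| ^ (-p) + Mtail α := by ring

lemma measurable_rpow_const (c : ℝ) : Measurable (fun t : ℝ => t ^ c) :=
  measurable_of_continuousOn_compl_singleton 0 (fun t ht =>
    (Real.continuousAt_rpow_const t c (Or.inl ht)).continuousWithinAt)

lemma Kper_measurable (α : ℝ) (hα0 : 0 < α) : Measurable (Kper α) := by
  have heq : Kper α = fun η =>
      (∑' k : ℤ, ENNReal.ofReal (|η + 2 * (k : ℝ) * Real.pi| ^ (-(1 + α)))).toReal := by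
    funext η
    rw [← ENNReal.ofReal_tsum_of_nonneg (fun k => Real.rpow_nonneg (abs_nonneg _) _)
      (Kper_summable α hα0 η), ENNReal.toReal_ofReal
      (tsum_nonneg fun _ => Real.rpow_nonneg (abs_nonneg _) _)]
    rfl
  rw [heq]
  refine Measurable.ennreal_toReal (Measurable.ennreal_tsum fun k => ?_)
  exact ENNReal.measurable_ofReal.comp
    ((measurable_rpow_const _).comp (measurable_id.add_const _).abs)

lemma sq_mul_rpow_le (α : ℝ) (hα0 : 0 < α) (η : ℝ) :
    η ^ 2 * |η| ^ (-(1+α)) ≤ |η| ^ (1 - α) := by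
  by_cases hη : η = 0
  · subst hη
    simp only [abs_zero]
    rw [Real.zero_rpow (neg_ne_zero.mpr (by linarith))]
    simpa using Real.rpow_nonneg le_rfl _
  · have h0 : 0 < |η| := abs_pos.mpr hη
    rw [← sq_abs η, ← Real.rpow_natCast |η| 2, ← Real.rpow_add h0]
    apply le_of_eq
    congr 1
    push_cast
    ring

lemma abs_rpow_integrableOn (r : ℝ) (hr : -1 < r) :
    IntegrableOn (fun η : ℝ => |η| ^ r) (Ioc (-π) π) := by
  have h1 : IntervalIntegrable (fun x : ℝ => |x| ^ r) volume 0 π := by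
    have base := intervalIntegral.intervalIntegrable_rpow' (a := 0) (b := π) hr
    rw [intervalIntegrable_iff] at base ⊢
    refine base.congr_fun (fun x hx => ?_) measurableSet_uIoc
    rw [uIoc_of_le pi_pos.le] at hx
    rw [abs_of_pos hx.1]
  have h2 : IntervalIntegrable (fun x : ℝ => |x| ^ r) volume (-π) 0 := by
    rw [IntervalIntegrable.iff_comp_neg]
    simp only [abs_neg, neg_neg, neg_zero]
    exact h1.symm
  have := (h2.trans h1)
  rwa [intervalIntegrable_iff, uIoc_of_le (by linarith [pi_pos] : -π ≤ π)] at this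

lemma second_diff_bound (u : ℝ → ℝ) (hC2 : ContDiff ℝ 2 u) :
    ∃ K : ℝ, 0 ≤ K ∧ ∀ x ∈ Icc (-π) π, ∀ η ∈ Icc (-π) π,
      |2 * u x - u (x + η) - u (x - η)| ≤ 2 * K * η ^ 2 := by
  have h2 : (2 : WithTop ℕ∞) = 1 + 1 := by norm_num
  have hstep := contDiff_succ_iff_deriv.mp (h2 ▸ hC2)
  have hu_diff : Differentiable ℝ u := hstep.1
  have hu'_cd : ContDiff ℝ 1 (deriv u) := hstep.2.2
  have hu'_diff : Differentiable ℝ (deriv u) := hu'_cd.differentiable one_ne_zero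
  have hu''_cont : Continuous (deriv (deriv u)) := (contDiff_one_iff_deriv.mp hu'_cd).2
  obtain ⟨K0, hK0⟩ := (isCompact_Icc (a := -(2*π)) (b := 2*π)).exists_bound_of_continuousOn
    hu''_cont.continuousOn
  set K := max K0 0 with hK
  refine ⟨K, le_max_right _ _, fun x hx η hη => ?_⟩
  obtain ⟨hx1, hx2⟩ := hx
  obtain ⟨hη1, hη2⟩ := hη
  have hIcc : Convex ℝ (Icc (-(2*π)) (2*π)) := convex_Icc _ _
  have hlip : ∀ a ∈ Icc (-(2*π)) (2*π), ∀ b ∈ Icc (-(2*π)) (2*π),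
      |deriv u b - deriv u a| ≤ K * |b - a| := by
    intro a ha b hb
    have := hIcc.norm_image_sub_le_of_norm_hasDerivWithin_le
      (f := deriv u) (f' := deriv (deriv u)) (C := K)
      (fun y hy => (hu'_diff y).hasDerivAt.hasDerivWithinAt)
      (fun y hy => le_trans (hK0 y hy) (le_max_left _ _)) ha hb
    simpa [Real.norm_eq_abs] using this
  set g : ℝ → ℝ := fun t => u (x + t) + u (x - t) - 2 * u x with hg
  have hg0 : g 0 = 0 := by simp [hg]; ring
  have habs : ∀ t ∈ uIcc (0:ℝ) η, |t| ≤ |η| := by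
    intro t ht
    rw [Set.mem_uIcc] at ht
    rcases abs_cases η with ⟨he, he2⟩ | ⟨he, he2⟩ <;>
      rcases abs_cases t with ⟨h3, h4⟩ | ⟨h3, h4⟩ <;>
      rcases ht with ⟨h5, h6⟩ | ⟨h5, h6⟩ <;> linarith
  have hmem : ∀ t ∈ uIcc (0:ℝ) η, (x + t) ∈ Icc (-(2*π)) (2*π) ∧ (x - t) ∈ Icc (-(2*π)) (2*π) := by
    intro t ht
    have h1 : |t| ≤ |η| := habs t ht
    have h2' : |η| ≤ π := abs_le.mpr ⟨hη1, hη2⟩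
    have h3 := abs_le.mp (le_trans h1 h2')
    exact ⟨⟨by linarith, by linarith⟩, ⟨by linarith, by linarith⟩⟩
  have hder : ∀ t ∈ uIcc (0:ℝ) η,
      HasDerivWithinAt g (deriv u (x + t) - deriv u (x - t)) (uIcc (0:ℝ) η) t := by
    intro t _
    have h1 : HasDerivAt (fun t => u (x + t)) (deriv u (x + t)) t := by
      simpa [Function.comp_def] using ((hu_diff (x + t)).hasDerivAt.comp t ((hasDerivAt_id t).const_add x))
    have h2' : HasDerivAt (fun t => u (x - t)) (-deriv u (x - t)) t := by
      simpa [Function.comp_def] using ((hu_diff (x - t)).hasDerivAt.comp t ((hasDerivAt_id t).neg.const_add x))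
    have h3 : deriv u (x + t) - deriv u (x - t) = deriv u (x + t) + -deriv u (x - t) := by ring
    rw [hg, h3]
    exact ((h1.add h2').sub_const (2 * u x)).hasDerivWithinAt
  have hbound : ∀ t ∈ uIcc (0:ℝ) η, ‖deriv u (x + t) - deriv u (x - t)‖ ≤ K * (2 * |η|) := by
    intro t ht
    have hm := hmem t ht
    have h1 : |t| ≤ |η| := habs t ht
    rw [Real.norm_eq_abs]
    calc |deriv u (x + t) - deriv u (x - t)| ≤ K * |(x + t) - (x - t)| := hlip _ hm.2 _ hm.1
      _ = K * |2 * t| := by congr 1; congr 1; ring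
      _ ≤ K * (2 * |η|) := by
          rw [abs_mul, abs_two]
          exact mul_le_mul_of_nonneg_left (by linarith) (le_max_right _ _)
  have hmvt := (convex_uIcc (0:ℝ) η).norm_image_sub_le_of_norm_hasDerivWithin_le
    hder hbound left_mem_uIcc right_mem_uIcc
  rw [hg0, sub_zero, Real.norm_eq_abs, Real.norm_eq_abs, sub_zero] at hmvt
  have heq : 2 * u x - u (x + η) - u (x - η) = -(g η) := by simp [hg]; ring
  rw [heq, abs_neg]
  calc |g η| ≤ K * (2 * |η|) * |η| := hmvt
    _ = 2 * K * (|η| * |η|) := by ring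
    _ = 2 * K * η ^ 2 := by rw [abs_mul_abs_self]; ring

lemma shift_integral (g : ℝ → ℝ) (hg : Function.Periodic g (2 * π)) (η : ℝ) :
    ∫ x in (-π)..π, g (x + η) = ∫ x in (-π)..π, g x := by
  rw [intervalIntegral.integral_comp_add_right]
  have h1 : ∫ x in (-π + η)..(π + η), g x = ∫ x in (-π + η)..(-π + η + (2*π)), g x := by
    congr 1; ring
  have h2 : ∫ x in (-π)..π, g x = ∫ x in (-π)..(-π + (2*π)), g x := by
    congr 1; ring
  rw [h1, h2, hg.intervalIntegral_add_eq (-π + η) (-π)]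

lemma inner_nonneg (s : ℝ) (hs0 : 0 < s)
    (u : ℝ → ℝ) (hcu : Continuous u) (hca : Continuous fun x => u x ^ s)
    (hper : Function.Periodic u (2 * Real.pi))
    (hpos : ∀ x, 0 ≤ u x) (η : ℝ) :
    0 ≤ ∫ x in (-π)..π, u x ^ s * (2 * u x - u (x + η) - u (x - η)) := by
  have key : (∫ x in (-π)..π, u x ^ s * (2 * u x - u (x + η) - u (x - η)))
      = ∫ x in (-π)..π, (u x ^ s - u (x + η) ^ s) * (u x - u (x + η)) := by
    have c1 : Continuous fun x => u x ^ s * u x := hca.mul hcu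
    have c2 : Continuous fun x => u x ^ s * u (x + η) :=
      hca.mul (hcu.comp (continuous_id.add continuous_const))
    have c3 : Continuous fun x => u x ^ s * u (x - η) :=
      hca.mul (hcu.comp (continuous_id.sub continuous_const))
    have c4 : Continuous fun x => u (x + η) ^ s * u x :=
      (hca.comp (continuous_id.add continuous_const)).mul hcu
    have c5 : Continuous fun x => u (x + η) ^ s * u (x + η) :=
      (hca.comp (continuous_id.add continuous_const)).mul
        (hcu.comp (continuous_id.add continuous_const))
    have hper1 : Function.Periodic (fun x => u x ^ s * u x) (2*π) := by
      intro x; simp [hper x]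
    have hper2 : Function.Periodic (fun x => u x ^ s * u (x - η)) (2*π) := by
      intro x; simp only []
      rw [hper x, show x + 2*π - η = (x - η) + 2*π by ring, hper (x - η)]
    have s1 : (∫ x in (-π)..π, u (x + η) ^ s * u (x + η))
        = ∫ x in (-π)..π, u x ^ s * u x := shift_integral _ hper1 η
    have s2 : (∫ x in (-π)..π, u (x + η) ^ s * u x)
        = ∫ x in (-π)..π, u x ^ s * u (x - η) := by
      have : ∀ x : ℝ, u (x + η) ^ s * u x = (fun y => u y ^ s * u (y - η)) (x + η) := by
        intro x; simp
      simp_rw [this]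
      exact shift_integral _ hper2 η
    have lhs_expand : (∫ x in (-π)..π, u x ^ s * (2 * u x - u (x + η) - u (x - η)))
        = 2 * (∫ x in (-π)..π, u x ^ s * u x) - (∫ x in (-π)..π, u x ^ s * u (x + η))
          - ∫ x in (-π)..π, u x ^ s * u (x - η) := by
      rw [← intervalIntegral.integral_const_mul, ← intervalIntegral.integral_sub
          (by exact (continuous_const.mul c1).intervalIntegrable _ _ : IntervalIntegrable (fun x => 2 * (u x ^ s * u x)) volume (-π) π) (c2.intervalIntegrable _ _),
        ← intervalIntegral.integral_sub
          (by exact ((continuous_const.mul c1).sub c2).intervalIntegrable _ _ : IntervalIntegrable (fun x => 2 * (u x ^ s * u x) - u x ^ s * u (x + η)) volume (-π) π) (c3.intervalIntegrable _ _)]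
      congr 1; funext x; ring
    have rhs_expand : (∫ x in (-π)..π, (u x ^ s - u (x + η) ^ s) * (u x - u (x + η)))
        = (∫ x in (-π)..π, u x ^ s * u x) - (∫ x in (-π)..π, u x ^ s * u (x + η))
          - (∫ x in (-π)..π, u (x + η) ^ s * u x)
          + ∫ x in (-π)..π, u (x + η) ^ s * u (x + η) := by
      rw [← intervalIntegral.integral_sub (c1.intervalIntegrable _ _) (c2.intervalIntegrable _ _),
        ← intervalIntegral.integral_sub (by exact (c1.sub c2).intervalIntegrable _ _ : IntervalIntegrable (fun x => u x ^ s * u x - u x ^ s * u (x + η)) volume (-π) π)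
          (c4.intervalIntegrable _ _),
        ← intervalIntegral.integral_add (by exact ((c1.sub c2).sub c4).intervalIntegrable _ _ : IntervalIntegrable (fun x => u x ^ s * u x - u x ^ s * u (x + η) - u (x + η) ^ s * u x) volume (-π) π)
          (c5.intervalIntegrable _ _)]
      congr 1; funext x; ring
    rw [lhs_expand, rhs_expand, s1, s2]
    ring
  rw [key]
  apply intervalIntegral.integral_nonneg (by linarith [pi_pos] : -π ≤ π)
  intro x _
  rcases le_total (u x) (u (x + η)) with h | h
  · have hs : u x ^ s ≤ u (x + η) ^ s := Real.rpow_le_rpow (hpos x) h hs0.le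
    have := mul_nonneg (neg_nonneg.mpr (show u x ^ s - u (x+η) ^ s ≤ 0 by linarith))
      (neg_nonneg.mpr (show u x - u (x+η) ≤ 0 by linarith))
    calc (0:ℝ) ≤ (u (x + η) ^ s - u x ^ s) * (u (x + η) - u x) := by simpa using this
      _ = (u x ^ s - u (x + η) ^ s) * (u x - u (x + η)) := by ring
  · have hs : u (x + η) ^ s ≤ u x ^ s := Real.rpow_le_rpow (hpos _) h hs0.le
    exact mul_nonneg (by linarith) (by linarith)

end Stmt8Aux

open Stmt8Aux Set

theorem stmt8 (α s : ℝ) (hα0 : 0 < α) (hα2 : α < 2) (hs0 : 0 < s) (hs1 : s ≤ 1)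
    (u : ℝ → ℝ) (hC2 : ContDiff ℝ 2 u) (hper : Function.Periodic u (2 * Real.pi))
    (hpos : ∀ x, 0 ≤ u x) :
    0 ≤ ∫ x in (-Real.pi)..Real.pi, u x ^ s * fracLap α u x := by
  have hle : -π ≤ π := by linarith [pi_pos]
  have hcu : Continuous u := hC2.continuous
  have hca : Continuous fun x => u x ^ s := by
    rw [continuous_iff_continuousAt]
    intro x
    exact (Real.continuousAt_rpow_const (u x) s (Or.inr hs0.le)).comp hcu.continuousAt
  have hc : 0 ≤ cFrac α := by
    unfold cFrac
    apply div_nonneg _ pi_pos.le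
    apply mul_nonneg (Real.Gamma_pos_of_pos (by linarith)).le
    apply Real.cos_nonneg_of_mem_Icc
    constructor <;> nlinarith [pi_pos]
  -- the double-integral form
  have step1 : ∀ x, u x ^ s * fracLap α u x
      = (cFrac α / 2) * ∫ η in (-π)..π,
          u x ^ s * ((2 * u x - u (x + η) - u (x - η)) * Kper α η) := by
    intro x
    rw [intervalIntegral.integral_const_mul, fracLap]
    ring
  simp only [step1]
  rw [intervalIntegral.integral_const_mul]
  apply mul_nonneg (by linarith)
  -- Fubini setup
  set S : Set ℝ := Ioc (-π) π with hS
  set μ : Measure ℝ := volume.restrict S with hμ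
  set F : ℝ → ℝ → ℝ := fun x η =>
    u x ^ s * ((2 * u x - u (x + η) - u (x - η)) * Kper α η) with hF
  -- integrability on the product
  obtain ⟨K, hK, hDb⟩ := second_diff_bound u hC2
  obtain ⟨B0, hB0⟩ := (isCompact_Icc (a := -π) (b := π)).exists_bound_of_continuousOn
    hca.continuousOn
  set B : ℝ := max B0 0 with hB
  have hBnn : 0 ≤ B := le_max_right _ _
  set M : ℝ := Mtail α with hM
  have hMnn : 0 ≤ M := Mtail_nonneg α
  have hint : Integrable (Function.uncurry F) (μ.prod μ) := by
    have hmeas : AEStronglyMeasurable (Function.uncurry F) (μ.prod μ) := by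
      have hcont : Continuous fun z : ℝ × ℝ =>
          u z.1 ^ s * (2 * u z.1 - u (z.1 + z.2) - u (z.1 - z.2)) :=
        (hca.comp continuous_fst).mul
          (((continuous_const.mul (hcu.comp continuous_fst)).sub
            (hcu.comp (continuous_fst.add continuous_snd))).sub
            (hcu.comp (continuous_fst.sub continuous_snd)))
      have hmeas2 : Measurable fun z : ℝ × ℝ => Kper α z.2 :=
        (Kper_measurable α hα0).comp measurable_snd
      have : Function.uncurry F = fun z : ℝ × ℝ =>
          (u z.1 ^ s * (2 * u z.1 - u (z.1 + z.2) - u (z.1 - z.2))) * Kper α z.2 := by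
        funext z
        simp only [Function.uncurry, hF]
        ring
      rw [this]
      exact (hcont.aestronglyMeasurable).mul hmeas2.aestronglyMeasurable
    have hGint : Integrable (fun z : ℝ × ℝ => (2*B*K) * (|z.2| ^ (1-α) + π^2 * M)) (μ.prod μ) := by
      have c_int : Integrable (fun _ : ℝ => (2*B*K : ℝ)) μ := by
        rw [hμ]
        exact integrableOn_const measure_Ioc_lt_top.ne
      have g_int : Integrable (fun η : ℝ => |η| ^ (1-α) + π^2 * M) μ := by
        rw [hμ]
        exact (abs_rpow_integrableOn (1-α) (by linarith)).add
          (integrableOn_const measure_Ioc_lt_top.ne)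
      exact c_int.mul_prod g_int
    refine hGint.mono' hmeas ?_
    have hprodeq : μ.prod μ = (volume.prod volume).restrict (S ×ˢ S) := by
      rw [hμ, Measure.prod_restrict]
    rw [hprodeq]
    filter_upwards [ae_restrict_mem (measurableSet_Ioc.prod measurableSet_Ioc)] with z hz
    obtain ⟨hz1, hz2⟩ := hz
    have hz1' : z.1 ∈ Icc (-π) π := Ioc_subset_Icc_self hz1
    have hz2' : z.2 ∈ Icc (-π) π := Ioc_subset_Icc_self hz2
    have hηabs : |z.2| ≤ π := abs_le.mpr ⟨hz2'.1, hz2'.2⟩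
    have h1 : |u z.1 ^ s * (2 * u z.1 - u (z.1 + z.2) - u (z.1 - z.2))| ≤ B * (2 * K * z.2 ^ 2) := by
      rw [abs_mul]
      apply mul_le_mul _ (hDb z.1 hz1' z.2 hz2') (abs_nonneg _) hBnn
      calc |u z.1 ^ s| = ‖u z.1 ^ s‖ := rfl
        _ ≤ B0 := hB0 z.1 hz1'
        _ ≤ B := le_max_left _ _
    have h2 : Kper α z.2 ≤ |z.2| ^ (-(1+α)) + M := Kper_le α hα0 hηabs
    have hKnn : 0 ≤ Kper α z.2 := Kper_nonneg α z.2
    have hFz : ‖Function.uncurry F z‖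
        = |u z.1 ^ s * (2 * u z.1 - u (z.1 + z.2) - u (z.1 - z.2))| * Kper α z.2 := by
      simp only [Function.uncurry, hF, Real.norm_eq_abs]
      rw [show u z.1 ^ s * ((2 * u z.1 - u (z.1 + z.2) - u (z.1 - z.2)) * Kper α z.2)
        = (u z.1 ^ s * (2 * u z.1 - u (z.1 + z.2) - u (z.1 - z.2))) * Kper α z.2 by ring,
        abs_mul, abs_of_nonneg hKnn]
    rw [hFz]
    calc |u z.1 ^ s * (2 * u z.1 - u (z.1 + z.2) - u (z.1 - z.2))| * Kper α z.2
        ≤ (B * (2 * K * z.2 ^ 2)) * (|z.2| ^ (-(1+α)) + M) :=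
          mul_le_mul h1 h2 hKnn (by positivity)
      _ ≤ (2*B*K) * (|z.2| ^ (1-α) + π^2 * M) := by
          have e1 : (2*B*K) * (z.2 ^ 2 * |z.2| ^ (-(1+α))) ≤ (2*B*K) * |z.2| ^ (1-α) :=
            mul_le_mul_of_nonneg_left (sq_mul_rpow_le α hα0 z.2) (by positivity)
          have esq : z.2 ^ 2 ≤ π ^ 2 := by nlinarith [abs_nonneg z.2, sq_abs z.2]
          have e2 : (2*B*K*M) * z.2 ^ 2 ≤ (2*B*K*M) * π ^ 2 :=
            mul_le_mul_of_nonneg_left esq (by positivity)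
          nlinarith [e1, e2]
  -- swap the integrals
  have swap := MeasureTheory.integral_integral_swap (μ := μ) (ν := μ) hint
  have houter : (∫ x in (-π)..π, ∫ η in (-π)..π, F x η)
      = ∫ x, ∫ η, F x η ∂μ ∂μ := by
    rw [intervalIntegral.integral_of_le hle]
    apply setIntegral_congr_fun measurableSet_Ioc
    intro x _
    show (∫ η in (-π)..π, F x η) = ∫ η, F x η ∂μ
    rw [intervalIntegral.integral_of_le hle]
  rw [houter, swap]
  refine integral_nonneg fun η => ?_
  -- inner nonnegativity for each η
  show (0:ℝ) ≤ ∫ x, F x η ∂μ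
  have heq2 : (∫ x, F x η ∂μ) = ∫ x in (-π)..π, F x η := by
    rw [intervalIntegral.integral_of_le hle]
  rw [heq2]
  have hrw : ∀ x, F x η = Kper α η * (u x ^ s * (2 * u x - u (x + η) - u (x - η))) := by
    intro x; simp only [hF]; ring
  simp only [hrw]
  rw [intervalIntegral.integral_const_mul]
  exact mul_nonneg (Kper_nonneg α η) (inner_nonneg s hs0 u hcu hca hper hpos η)
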